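/- The function f(δ⁺, δ⁻) = A⁺·e^{-k·δ⁺}·(δ⁺ + b) + A⁻·e^{-k·δ⁻}·(δ⁻ - b) + b·H is jointly concave on the rectangle [0, 2/k - b] × [0, 2/k + b], provided A⁺, A⁻, k > 0 and |b| ≤ 2/k. -/

import Mathlib

open Real Set

private lemma hasDeriv1 (A k c : ℝ) (x : ℝ) :
    HasDerivAt (fun x => A * Real.exp (-k * x) * (x + c))
      (A * Real.exp (-k * x) * (1 - k * (x + c))) x := by
  have he : HasDerivAt (fun x => Real.exp (-k * x)) (-k * Real.exp (-k * x)) x := by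
    have h0 : HasDerivAt (fun x : ℝ => -k * x) (-k) x := by
      simpa using (hasDerivAt_id x).const_mul (-k)
    simpa [mul_comm] using h0.exp
  have h := ((he.const_mul A).mul ((hasDerivAt_id x).add_const c))
  refine h.congr_deriv ?_
  simp only [id_eq]
  ring

private lemma derivEq (A k c : ℝ) :
    deriv (fun x => A * Real.exp (-k * x) * (x + c)) =
      fun x => A * Real.exp (-k * x) * (1 - k * (x + c)) := by
  funext x
  exact (hasDeriv1 A k c x).deriv

private lemma hasDeriv2 (A k c : ℝ) (x : ℝ) :
    HasDerivAt (fun x => A * Real.exp (-k * x) * (1 - k * (x + c)))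
      (A * Real.exp (-k * x) * (k * (k * (x + c)) - 2 * k)) x := by
  have he : HasDerivAt (fun x => Real.exp (-k * x)) (-k * Real.exp (-k * x)) x := by
    have h0 : HasDerivAt (fun x : ℝ => -k * x) (-k) x := by
      simpa using (hasDerivAt_id x).const_mul (-k)
    simpa [mul_comm] using h0.exp
  have hl : HasDerivAt (fun x : ℝ => 1 - k * (x + c)) (-k) x := by
    have := (((hasDerivAt_id x).add_const c).const_mul k).const_sub 1
    simpa using this
  have h := (he.const_mul A).mul hl
  refine h.congr_deriv ?_
  ring

private lemma aux_concave (A k c : ℝ) (hA : 0 < A) (hk : 0 < k) :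
    ConcaveOn ℝ (Set.Icc 0 (2 / k - c)) (fun x => A * Real.exp (-k * x) * (x + c)) := by
  apply concaveOn_of_deriv2_nonpos (convex_Icc _ _)
  · exact (Continuous.continuousOn (by continuity))
  · intro x hx; exact (hasDeriv1 A k c x).differentiableAt.differentiableWithinAt
  · intro x hx
    rw [derivEq]
    exact (hasDeriv2 A k c x).differentiableAt.differentiableWithinAt
  · intro x hx
    rw [Function.iterate_succ, Function.iterate_one, Function.comp_apply, derivEq,
      (hasDeriv2 A k c x).deriv]
    rw [interior_Icc] at hx
    have hx2 : x + c ≤ 2 / k := by linarith [hx.2]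
    have : k * (x + c) ≤ 2 := by
      rw [div_sub' hk.ne', mem_Ioo] at hx
      calc k * (x + c) ≤ k * (2 / k) := by nlinarith [hx.2]
        _ = 2 := by field_simp
    have hexp : 0 < Real.exp (-k * x) := Real.exp_pos _
    have heq : A * Real.exp (-k * x) * (k * (k * (x + c)) - 2 * k)
        = (A * Real.exp (-k * x) * k) * (k * (x + c) - 2) := by ring
    rw [heq]
    exact mul_nonpos_of_nonneg_of_nonpos (by positivity) (by linarith)

theorem stmt_4 (Ap Am k b H : ℝ) (hAp : 0 < Ap) (hAm : 0 < Am) (hk : 0 < k)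
    (hb : |b| ≤ 2 / k) :
    ConcaveOn ℝ (Set.Icc 0 (2 / k - b) ×ˢ Set.Icc 0 (2 / k + b))
      (fun p : ℝ × ℝ =>
        Ap * Real.exp (-k * p.1) * (p.1 + b) + Am * Real.exp (-k * p.2) * (p.2 - b)
          + b * H) := by
  have h1 := (aux_concave Ap k b hAp hk).comp_linearMap (LinearMap.fst ℝ ℝ ℝ)
  have h2 : ConcaveOn ℝ (Set.Icc 0 (2 / k + b)) (fun y => Am * Real.exp (-k * y) * (y - b)) := by
    have := aux_concave Am k (-b) hAm hk
    simpa [sub_neg_eq_add, sub_eq_add_neg] using this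
  have h2' := h2.comp_linearMap (LinearMap.snd ℝ ℝ ℝ)
  have hconv : Convex ℝ (Set.Icc (0:ℝ) (2 / k - b) ×ˢ Set.Icc (0:ℝ) (2 / k + b)) :=
    (convex_Icc _ _).prod (convex_Icc _ _)
  have hs1 : (Set.Icc (0:ℝ) (2 / k - b) ×ˢ Set.Icc (0:ℝ) (2 / k + b)) ⊆
      (LinearMap.fst ℝ ℝ ℝ) ⁻¹' Set.Icc 0 (2 / k - b) := fun p hp => hp.1
  have hs2 : (Set.Icc (0:ℝ) (2 / k - b) ×ˢ Set.Icc (0:ℝ) (2 / k + b)) ⊆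
      (LinearMap.snd ℝ ℝ ℝ) ⁻¹' Set.Icc 0 (2 / k + b) := fun p hp => hp.2
  have hsum := ((h1.subset hs1 hconv).add (h2'.subset hs2 hconv)).add_const (b * H)
  exact hsum
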